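/- Let X ⊂ ℝ^d be bounded and Borel, and let M_f be a class of finite measures on X admitting Lebesgue densities λ : X → (0, ∞). Fix c > 0 and define, for Λ ∈ M_f with density λ, total mass |Λ| = ∫_X λ(y) dy, and a configuration {y₁, …, yₙ}, the scoring function S(Λ, {y₁, …, yₙ}) = −Σ_{i=1}^n log λ(yᵢ) + n log|Λ| + c (|Λ| − n)². Let Φ be a point process on X with intensity measure Λ₀ ∈ M_f (density λ₀) such that E[Φ(X)²] < ∞ and the relevant integrability conditions hold. Then for every Λ ∈ M_f: E[S(Λ, Φ)] ≥ E[S(Λ₀, Φ)], with equality if and only if Λ = Λ₀ (i.e. λ = λ₀ Lebesgue-a.e.). This is the strictly consistent scoring function for the intensity measure obtained by combining the logarithmic score for the normalized intensity with the quadratic Bregman score for the expected total number of points. -/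

import Mathlib

open MeasureTheory

lemma aux_campbell_nn {α Ω : Type*} [MeasurableSpace α] [MeasurableSpace Ω]
    (μ : Measure Ω) (Φ : Ω → Measure α) (hΦ : Measurable Φ)
    (g : α → ℝ) (hg : Measurable g) (hg0 : 0 ≤ g)
    (hfin : ∫⁻ x, ENNReal.ofReal (g x) ∂(μ.bind Φ) < ⊤) :
    Integrable (fun ω => ∫ x, g x ∂(Φ ω)) μ ∧
      ∫ ω, ∫ x, g x ∂(Φ ω) ∂μ = (∫⁻ x, ENNReal.ofReal (g x) ∂(μ.bind Φ)).toReal := by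
  have hmg : Measurable fun x => ENNReal.ofReal (g x) := hg.ennreal_ofReal
  have hbind : ∫⁻ ω, ∫⁻ x, ENNReal.ofReal (g x) ∂(Φ ω) ∂μ
      = ∫⁻ x, ENNReal.ofReal (g x) ∂(μ.bind Φ) :=
    (Measure.lintegral_bind hΦ.aemeasurable hmg.aemeasurable).symm
  have hmeasI : Measurable fun ω => ∫⁻ x, ENNReal.ofReal (g x) ∂(Φ ω) :=
    (Measure.measurable_lintegral hmg).comp hΦ
  have hae : ∀ᵐ ω ∂μ, ∫⁻ x, ENNReal.ofReal (g x) ∂(Φ ω) < ⊤ := by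
    refine ae_lt_top hmeasI ?_
    rw [hbind]; exact hfin.ne
  have heq : ∀ ω, ∫ x, g x ∂(Φ ω) = (∫⁻ x, ENNReal.ofReal (g x) ∂(Φ ω)).toReal := by
    intro ω
    rw [integral_eq_lintegral_of_nonneg_ae (ae_of_all _ fun x => hg0 x)
      hg.aestronglyMeasurable]
  have hint : Integrable (fun ω => (∫⁻ x, ENNReal.ofReal (g x) ∂(Φ ω)).toReal) μ :=
    integrable_toReal_of_lintegral_ne_top hmeasI.aemeasurable
      (by rwa [lintegral_congr_ae (ae_of_all _ fun ω => rfl), hbind, ← lt_top_iff_ne_top])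
  constructor
  · exact hint.congr (ae_of_all _ fun ω => (heq ω).symm)
  · rw [integral_congr_ae (ae_of_all _ heq), integral_toReal hmeasI.aemeasurable hae, hbind]

lemma aux_campbell {α Ω : Type*} [MeasurableSpace α] [MeasurableSpace Ω]
    (μ : Measure Ω) (Φ : Ω → Measure α) (hΦ : Measurable Φ)
    (g : α → ℝ) (hg : Measurable g)
    (hfin : ∫⁻ x, ENNReal.ofReal |g x| ∂(μ.bind Φ) < ⊤) :
    Integrable (fun ω => ∫ x, g x ∂(Φ ω)) μ ∧
      ∫ ω, ∫ x, g x ∂(Φ ω) ∂μ = ∫ x, g x ∂(μ.bind Φ) := by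
  set gp : α → ℝ := fun x => max (g x) 0 with hgp
  set gm : α → ℝ := fun x => max (-g x) 0 with hgm
  have hgpm : Measurable gp := hg.max measurable_const
  have hgmm : Measurable gm := hg.neg.max measurable_const
  have hgp0 : 0 ≤ gp := fun x => le_max_right _ _
  have hgm0 : 0 ≤ gm := fun x => le_max_right _ _
  have hple : ∀ x, gp x ≤ |g x| := fun x => max_le (le_abs_self _) (abs_nonneg _)
  have hmle : ∀ x, gm x ≤ |g x| := fun x => max_le (neg_le_abs _) (abs_nonneg _)
  have hfinp : ∫⁻ x, ENNReal.ofReal (gp x) ∂(μ.bind Φ) < ⊤ :=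
    lt_of_le_of_lt (lintegral_mono fun x => ENNReal.ofReal_le_ofReal (hple x)) hfin
  have hfinm : ∫⁻ x, ENNReal.ofReal (gm x) ∂(μ.bind Φ) < ⊤ :=
    lt_of_le_of_lt (lintegral_mono fun x => ENNReal.ofReal_le_ofReal (hmle x)) hfin
  obtain ⟨hip, hep⟩ := aux_campbell_nn μ Φ hΦ gp hgpm hgp0 hfinp
  obtain ⟨him, hem⟩ := aux_campbell_nn μ Φ hΦ gm hgmm hgm0 hfinm
  -- a.e. integrability of g wrt Φ ω
  have hmabs : Measurable fun x => ENNReal.ofReal |g x| := hg.abs.ennreal_ofReal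
  have hbindabs : ∫⁻ ω, ∫⁻ x, ENNReal.ofReal |g x| ∂(Φ ω) ∂μ
      = ∫⁻ x, ENNReal.ofReal |g x| ∂(μ.bind Φ) := (Measure.lintegral_bind hΦ.aemeasurable hmabs.aemeasurable).symm
  have haefin : ∀ᵐ ω ∂μ, ∫⁻ x, ENNReal.ofReal |g x| ∂(Φ ω) < ⊤ := by
    refine ae_lt_top ((Measure.measurable_lintegral hmabs).comp hΦ) ?_
    rw [hbindabs]; exact hfin.ne
  have haeint : ∀ᵐ ω ∂μ, Integrable g (Φ ω) := by
    filter_upwards [haefin] with ω hω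
    refine ⟨hg.aestronglyMeasurable, ?_⟩
    rw [hasFiniteIntegral_iff_norm]
    simpa [Real.norm_eq_abs] using hω
  have hsplit : ∀ᵐ ω ∂μ, ∫ x, g x ∂(Φ ω) = (∫ x, gp x ∂(Φ ω)) - ∫ x, gm x ∂(Φ ω) := by
    filter_upwards [haeint] with ω hω
    have h1 : Integrable gp (Φ ω) := hω.abs.mono' hgpm.aestronglyMeasurable
      (ae_of_all _ fun x => by simpa [abs_of_nonneg (hgp0 x)] using hple x)
    have h2 : Integrable gm (Φ ω) := hω.abs.mono' hgmm.aestronglyMeasurable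
      (ae_of_all _ fun x => by simpa [abs_of_nonneg (hgm0 x)] using hmle x)
    rw [← integral_sub h1 h2]
    congr 1; funext x; simp [hgp, hgm, max_def]; split_ifs with h1 h2 h2 <;> linarith
  have hgint : Integrable g (μ.bind Φ) := by
    refine ⟨hg.aestronglyMeasurable, ?_⟩
    rw [hasFiniteIntegral_iff_norm]
    simpa [Real.norm_eq_abs] using hfin
  have h1b : Integrable gp (μ.bind Φ) := hgint.abs.mono' hgpm.aestronglyMeasurable
      (ae_of_all _ fun x => by simpa [abs_of_nonneg (hgp0 x)] using hple x)
  have h2b : Integrable gm (μ.bind Φ) := hgint.abs.mono' hgmm.aestronglyMeasurable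
      (ae_of_all _ fun x => by simpa [abs_of_nonneg (hgm0 x)] using hmle x)
  constructor
  · exact (hip.sub him).congr (hsplit.mono fun ω h => h.symm)
  · rw [integral_congr_ae hsplit, integral_sub hip him, hep, hem,
      ← integral_eq_lintegral_of_nonneg_ae (ae_of_all _ fun x => hgp0 x) hgpm.aestronglyMeasurable,
      ← integral_eq_lintegral_of_nonneg_ae (ae_of_all _ fun x => hgm0 x) hgmm.aestronglyMeasurable,
      ← integral_sub h1b h2b]
    congr 1; funext x; simp [hgp, hgm, max_def]; split_ifs with h1 h2 h2 <;> linarith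

/-- **Strictly consistent scoring for the intensity via logarithmic plus
quadratic components.** On a bounded Borel `X ⊆ ℝ^d`, for reports given by
positive Lebesgue densities `q` in a class `D`, the score
`S(Λ, φ) = -Σᵢ log q(yᵢ) + n log|Λ| + c(|Λ| - n)²` (with `n = φ(X)` the number
of points and `|Λ| = ∫_X q`) is strictly consistent for the intensity measure
of the point process `Φ` with intensity density `lam₀ ∈ D`. -/
theorem log_quadratic_intensity_score_strictly_consistent
    (d : ℕ) (X : Set (Fin d → ℝ))
    (hXbdd : Bornology.IsBounded X) (hXmeas : MeasurableSet X)
    {Ω : Type*} [MeasurableSpace Ω] (μ : Measure Ω) [IsProbabilityMeasure μ]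
    (Φ : Ω → Measure (Fin d → ℝ))
    (hΦmeas : ∀ B : Set (Fin d → ℝ), MeasurableSet B →
      Measurable fun ω => Φ ω B)
    (hΦsupp : ∀ ω, Φ ω Xᶜ = 0)
    -- the class `D` of density reports
    (D : Set ((Fin d → ℝ) → ℝ))
    (hDmeas : ∀ q ∈ D, Measurable q)
    (hDpos : ∀ q ∈ D, ∀ x ∈ X, 0 < q x)
    (hDint : ∀ q ∈ D, IntegrableOn q X volume)
    -- the true intensity density `lam₀ ∈ D`
    (lam₀ : (Fin d → ℝ) → ℝ) (hlam₀D : lam₀ ∈ D)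
    (hΛ₀ : ∀ B : Set (Fin d → ℝ), MeasurableSet B → B ⊆ X →
      ∫⁻ ω, Φ ω B ∂μ = ENNReal.ofReal (∫ x in B, lam₀ x))
    -- `E[Φ(X)²] < ∞`
    (hsecond : ∫⁻ ω, (Φ ω X) ^ 2 ∂μ < ⊤)
    (c : ℝ) (hc : 0 < c)
    -- the score
    (Sc : ((Fin d → ℝ) → ℝ) → Measure (Fin d → ℝ) → ℝ)
    (hSc : ∀ (q : (Fin d → ℝ) → ℝ) (φ : Measure (Fin d → ℝ)), Sc q φ =
      -(∫ x, Real.log (q x) ∂φ) +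
        (φ X).toReal * Real.log (∫ x in X, q x) +
        c * ((∫ x in X, q x) - (φ X).toReal) ^ 2)
    -- the relevant integrability conditions
    (hint : ∀ q ∈ D, Integrable (fun ω => Sc q (Φ ω)) μ)
    (hlog : ∀ q ∈ D,
      IntegrableOn (fun x => lam₀ x * |Real.log (q x)|) X volume) :
    ∀ q ∈ D,
      (∫ ω, Sc lam₀ (Φ ω) ∂μ ≤ ∫ ω, Sc q (Φ ω) ∂μ) ∧
      (∫ ω, Sc q (Φ ω) ∂μ = ∫ ω, Sc lam₀ (Φ ω) ∂μ ↔
        ∀ᵐ x ∂(volume.restrict X), q x = lam₀ x) := by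
  intro q hq
  have hlam₀meas : Measurable lam₀ := hDmeas lam₀ hlam₀D
  by_cases hX0 : volume X = 0
  · -- degenerate case: X is null
    have hν : volume.restrict X = 0 := Measure.restrict_eq_zero.mpr hX0
    have hae0 : ∀ᵐ ω ∂μ, Φ ω = 0 := by
      have h1 : ∫⁻ ω, Φ ω X ∂μ = 0 := by
        rw [hΛ₀ X hXmeas subset_rfl]
        simp [hν]
      have h2 := (lintegral_eq_zero_iff (hΦmeas X hXmeas)).mp h1
      filter_upwards [h2] with ω hω
      apply Measure.measure_univ_eq_zero.mp
      have hle : Φ ω Set.univ ≤ Φ ω X + Φ ω Xᶜ := by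
        rw [← Set.union_compl_self X]; exact measure_union_le _ _
      rw [hω, hΦsupp ω, add_zero] at hle
      exact le_antisymm hle zero_le
    have hSc0 : ∀ r : (Fin d → ℝ) → ℝ, ∀ᵐ ω ∂μ, Sc r (Φ ω) = 0 := by
      intro r
      filter_upwards [hae0] with ω hω
      rw [hSc, hω]
      simp [hν]
    have hq0 : ∫ ω, Sc q (Φ ω) ∂μ = 0 := by
      rw [integral_congr_ae (hSc0 q)]; simp
    have hl0 : ∫ ω, Sc lam₀ (Φ ω) ∂μ = 0 := by
      rw [integral_congr_ae (hSc0 lam₀)]; simp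
    refine ⟨by rw [hq0, hl0], ?_⟩
    rw [hq0, hl0, hν]
    simp
  -- main case
  have hΦ : Measurable Φ := Measure.measurable_of_measurable_coe Φ hΦmeas
  have hM : μ.bind Φ
      = (volume.restrict X).withDensity (fun x => ENNReal.ofReal (lam₀ x)) := by
    ext s hs
    rw [Measure.bind_apply hs hΦ.aemeasurable, withDensity_apply _ hs,
      Measure.restrict_restrict hs]
    have hsX : ∀ ω, Φ ω s = Φ ω (s ∩ X) := by
      intro ω
      have h0 : Φ ω (s \ X) = 0 :=
        measure_mono_null (fun x hx => hx.2) (hΦsupp ω)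
      rw [← measure_inter_add_diff s hXmeas, h0, add_zero]
    simp_rw [hsX]
    rw [hΛ₀ (s ∩ X) (hs.inter hXmeas) Set.inter_subset_right,
      ofReal_integral_eq_lintegral_ofReal
        ((hDint lam₀ hlam₀D).mono_set Set.inter_subset_right) ?_]
    filter_upwards [ae_restrict_mem (hs.inter hXmeas)] with x hx
    exact (hDpos lam₀ hlam₀D x hx.2).le
  set a₀ : ℝ := ∫ x in X, lam₀ x with ha₀def
  set a : ℝ := ∫ x in X, q x with hadef
  have ha₀nn : 0 ≤ a₀ :=
    setIntegral_nonneg hXmeas fun x hx => (hDpos lam₀ hlam₀D x hx).le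
  have hEnl : ∫⁻ ω, Φ ω X ∂μ = ENNReal.ofReal a₀ := hΛ₀ X hXmeas subset_rfl
  have hnmeas : Measurable fun ω => Φ ω X := hΦmeas X hXmeas
  have haefinX : ∀ᵐ ω ∂μ, Φ ω X < ⊤ :=
    ae_lt_top hnmeas (by rw [hEnl]; exact ENNReal.ofReal_ne_top)
  set n : Ω → ℝ := fun ω => (Φ ω X).toReal with hndef
  have hn_int : Integrable n μ :=
    integrable_toReal_of_lintegral_ne_top hnmeas.aemeasurable
      (by rw [hEnl]; exact ENNReal.ofReal_ne_top)
  have hEn : ∫ ω, n ω ∂μ = a₀ := by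
    rw [hndef]
    rw [integral_toReal hnmeas.aemeasurable haefinX, hEnl,
      ENNReal.toReal_ofReal ha₀nn]
  have hn2 : Integrable (fun ω => n ω ^ 2) μ := by
    have h := integrable_toReal_of_lintegral_ne_top
      (hnmeas.pow_const 2).aemeasurable hsecond.ne
    exact h.congr (ae_of_all _ fun ω => by simp [hndef, ENNReal.toReal_pow])
  set m2 : ℝ := ∫ ω, n ω ^ 2 ∂μ with hm2def
  -- positivity of total masses
  have hXpos : 0 < volume X := lt_of_le_of_ne zero_le (Ne.symm hX0)
  have hpos : ∀ r ∈ D, 0 < ∫ x in X, r x := by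
    intro r hr
    rw [setIntegral_pos_iff_support_of_nonneg_ae
      (by filter_upwards [ae_restrict_mem hXmeas] with x hx
          exact (hDpos r hr x hx).le)
      (hDint r hr)]
    have hsub : X ⊆ Function.support r := fun x hx => (hDpos r hr x hx).ne'
    rwa [Set.inter_eq_self_of_subset_right hsub]
  have ha₀pos : 0 < a₀ := hpos lam₀ hlam₀D
  have hapos : 0 < a := hpos q hq
  -- Campbell for logarithms
  have hCamp : ∀ r ∈ D, Integrable (fun ω => ∫ x, Real.log (r x) ∂(Φ ω)) μ ∧
      ∫ ω, (∫ x, Real.log (r x) ∂(Φ ω)) ∂μ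
        = ∫ x in X, lam₀ x * Real.log (r x) := by
    intro r hr
    have hrmeas : Measurable fun x => Real.log (r x) :=
      Real.measurable_log.comp (hDmeas r hr)
    have key : ∫⁻ x, ENNReal.ofReal |Real.log (r x)| ∂(μ.bind Φ)
        = ENNReal.ofReal (∫ x in X, lam₀ x * |Real.log (r x)|) := by
      rw [hM, lintegral_withDensity_eq_lintegral_mul _
        hlam₀meas.ennreal_ofReal hrmeas.abs.ennreal_ofReal,
        ofReal_integral_eq_lintegral_ofReal (hlog r hr) ?_]
      · apply lintegral_congr_ae
        filter_upwards [ae_restrict_mem hXmeas] with x hx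
        rw [Pi.mul_apply, ← ENNReal.ofReal_mul (hDpos lam₀ hlam₀D x hx).le]
      · filter_upwards [ae_restrict_mem hXmeas] with x hx
        exact mul_nonneg (hDpos lam₀ hlam₀D x hx).le (abs_nonneg _)
    have hfin : ∫⁻ x, ENNReal.ofReal |Real.log (r x)| ∂(μ.bind Φ) < ⊤ := by
      rw [key]; exact ENNReal.ofReal_lt_top
    obtain ⟨h1, h2⟩ := aux_campbell μ Φ hΦ _ hrmeas hfin
    refine ⟨h1, ?_⟩
    rw [h2, hM]
    have : (fun x => ENNReal.ofReal (lam₀ x))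
        = fun x => ((Real.toNNReal (lam₀ x) : NNReal) : ENNReal) := rfl
    rw [this, integral_withDensity_eq_integral_smul hlam₀meas.real_toNNReal]
    apply integral_congr_ae
    filter_upwards [ae_restrict_mem hXmeas] with x hx
    simp [NNReal.smul_def, Real.coe_toNNReal _ (hDpos lam₀ hlam₀D x hx).le]
  -- expectation of the score
  have hE : ∀ r ∈ D, ∫ ω, Sc r (Φ ω) ∂μ
      = -(∫ x in X, lam₀ x * Real.log (r x))
        + a₀ * Real.log (∫ x in X, r x)
        + c * ((∫ x in X, r x) ^ 2 - 2 * (∫ x in X, r x) * a₀ + m2) := by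
    intro r hr
    obtain ⟨hLint, hLval⟩ := hCamp r hr
    set A : ℝ := ∫ x in X, r x with hA
    have hq1 : Integrable (fun ω => n ω * Real.log A) μ := hn_int.mul_const _
    have hq2' : Integrable (fun ω => c * (A ^ 2 - 2 * A * n ω + n ω ^ 2)) μ :=
      (((integrable_const (A ^ 2)).sub (hn_int.const_mul (2 * A))).add hn2).const_mul c
    have hq2 : Integrable (fun ω => c * (A - n ω) ^ 2) μ :=
      hq2'.congr (ae_of_all _ fun ω => by ring)
    have hLneg : Integrable (fun ω => -(∫ x, Real.log (r x) ∂(Φ ω))) μ := hLint.neg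
    have i5 : Integrable
        (fun ω => -(∫ x, Real.log (r x) ∂(Φ ω)) + n ω * Real.log A) μ :=
      hLneg.add hq1
    have i1 : Integrable (fun ω => A ^ 2 - 2 * A * n ω) μ :=
      (integrable_const _).sub (hn_int.const_mul _)
    have i2 : Integrable (fun _ : Ω => A ^ 2) μ := integrable_const _
    have i3 : Integrable (fun ω => 2 * A * n ω) μ := hn_int.const_mul _
    have hexp : ∫ ω, (A - n ω) ^ 2 ∂μ = A ^ 2 - 2 * A * a₀ + m2 := by
      have hh : ∫ ω, (A - n ω) ^ 2 ∂μ
          = ∫ ω, (A ^ 2 - 2 * A * n ω + n ω ^ 2) ∂μ :=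
        integral_congr_ae (ae_of_all _ fun ω => by ring)
      rw [hh, integral_add i1 hn2, integral_sub i2 i3, integral_const_mul, hEn,
        ← hm2def, integral_const]
      simp
    have hstep : ∫ ω, Sc r (Φ ω) ∂μ
        = ∫ ω, (-(∫ x, Real.log (r x) ∂(Φ ω)) + n ω * Real.log A
            + c * (A - n ω) ^ 2) ∂μ := by
      apply integral_congr_ae
      apply ae_of_all
      intro ω
      show Sc r (Φ ω) = _
      rw [hSc]
    rw [hstep, integral_add i5 hq2, integral_add hLneg hq1,
      integral_neg, hLval, integral_mul_const, hEn, integral_const_mul, hexp]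
  -- the pointwise discrepancy
  set t : (Fin d → ℝ) → ℝ := fun x => (a₀ * q x) / (a * lam₀ x) with htdef
  set F : (Fin d → ℝ) → ℝ := fun x => lam₀ x * (t x - 1 - Real.log (t x)) with hFdef
  set G : (Fin d → ℝ) → ℝ := fun x =>
    (lam₀ x * Real.log (lam₀ x) - lam₀ x * Real.log (q x))
    + (Real.log a - Real.log a₀) * lam₀ x + ((a₀ / a) * q x - lam₀ x) with hGdef
  have htx : ∀ x, t x = (a₀ * q x) / (a * lam₀ x) := fun x => rfl
  have hFx : ∀ x, F x = lam₀ x * (t x - 1 - Real.log (t x)) := fun x => rfl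
  have hGx : ∀ x, G x = (lam₀ x * Real.log (lam₀ x) - lam₀ x * Real.log (q x))
      + (Real.log a - Real.log a₀) * lam₀ x + ((a₀ / a) * q x - lam₀ x) :=
    fun x => rfl
  have hFG : ∀ᵐ x ∂(volume.restrict X), F x = G x := by
    filter_upwards [ae_restrict_mem hXmeas] with x hx
    have h1 : 0 < lam₀ x := hDpos lam₀ hlam₀D x hx
    have h2 : 0 < q x := hDpos q hq x hx
    have hlogt : Real.log (t x)
        = Real.log a₀ + Real.log (q x) - (Real.log a + Real.log (lam₀ x)) := by
      rw [htx, Real.log_div (by positivity) (by positivity),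
        Real.log_mul (ne_of_gt ha₀pos) (ne_of_gt h2),
        Real.log_mul (ne_of_gt hapos) (ne_of_gt h1)]
    have htv : lam₀ x * t x = (a₀ / a) * q x := by
      rw [htx]; field_simp
    have hFx2 : F x = lam₀ x * t x - lam₀ x - lam₀ x * Real.log (t x) := by
      rw [hFx]; ring
    rw [hFx2, htv, hlogt, hGx]
    ring
  have habs : ∀ r ∈ D, IntegrableOn (fun x => lam₀ x * Real.log (r x)) X volume := by
    intro r hr
    refine (hlog r hr).mono'
      ((hlam₀meas.mul (Real.measurable_log.comp (hDmeas r hr))).aestronglyMeasurable) ?_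
    filter_upwards [ae_restrict_mem hXmeas] with x hx
    rw [Real.norm_eq_abs, abs_mul, abs_of_nonneg (hDpos lam₀ hlam₀D x hx).le]
  have j1 : IntegrableOn (fun x =>
      lam₀ x * Real.log (lam₀ x) - lam₀ x * Real.log (q x)) X volume :=
    (habs lam₀ hlam₀D).sub (habs q hq)
  have j2 : IntegrableOn (fun x => (Real.log a - Real.log a₀) * lam₀ x) X volume :=
    (hDint lam₀ hlam₀D).const_mul _
  have j12 : IntegrableOn (fun x =>
      (lam₀ x * Real.log (lam₀ x) - lam₀ x * Real.log (q x))
      + (Real.log a - Real.log a₀) * lam₀ x) X volume := j1.add j2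
  have j3 : IntegrableOn (fun x => (a₀ / a) * q x) X volume :=
    (hDint q hq).const_mul _
  have j4 : IntegrableOn (fun x => (a₀ / a) * q x - lam₀ x) X volume :=
    j3.sub (hDint lam₀ hlam₀D)
  have hGint : IntegrableOn G X volume := by
    exact (j12.add j4).congr (ae_of_all _ fun x => (hGx x).symm)
  have hFint : IntegrableOn F X volume := hGint.congr (hFG.mono fun x h => h.symm)
  have hFnn : ∀ᵐ x ∂(volume.restrict X), 0 ≤ F x := by
    filter_upwards [ae_restrict_mem hXmeas] with x hx
    have h1 : 0 < lam₀ x := hDpos lam₀ hlam₀D x hx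
    have h2 : 0 < q x := hDpos q hq x hx
    have htpos : 0 < t x := by rw [htx]; positivity
    have hlog1 := Real.log_le_sub_one_of_pos htpos
    have hnn : 0 ≤ t x - 1 - Real.log (t x) := by linarith
    rw [hFx]
    exact mul_nonneg h1.le hnn
  have hGval : ∫ x in X, G x
      = (∫ x in X, lam₀ x * Real.log (lam₀ x))
        - (∫ x in X, lam₀ x * Real.log (q x))
        + (Real.log a - Real.log a₀) * a₀ := by
    have e1 : ∫ x in X, G x = ∫ x in X,
        ((lam₀ x * Real.log (lam₀ x) - lam₀ x * Real.log (q x))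
        + (Real.log a - Real.log a₀) * lam₀ x + ((a₀ / a) * q x - lam₀ x)) :=
      integral_congr_ae (ae_of_all _ fun x => hGx x)
    rw [e1, integral_add j12 j4, integral_add j1 j2,
      integral_sub (habs lam₀ hlam₀D) (habs q hq),
      integral_sub j3 (hDint lam₀ hlam₀D),
      integral_const_mul, integral_const_mul, ← ha₀def, ← hadef,
      div_mul_cancel₀ _ (ne_of_gt hapos)]
    ring
  have hΔ : ∫ ω, Sc q (Φ ω) ∂μ - ∫ ω, Sc lam₀ (Φ ω) ∂μ
      = (∫ x in X, F x) + c * (a - a₀) ^ 2 := by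
    rw [hE q hq, hE lam₀ hlam₀D, integral_congr_ae hFG, hGval, ← ha₀def, ← hadef]
    ring
  have hFpos : 0 ≤ ∫ x in X, F x := integral_nonneg_of_ae hFnn
  have hcsq : 0 ≤ c * (a - a₀) ^ 2 := mul_nonneg hc.le (sq_nonneg _)
  refine ⟨by linarith, ?_, ?_⟩
  · intro heq
    have h0 : (∫ x in X, F x) + c * (a - a₀) ^ 2 = 0 := by
      rw [← hΔ, heq]; ring
    have hF0 : ∫ x in X, F x = 0 := by linarith
    have haa : a = a₀ := by
      have h1 : c * (a - a₀) ^ 2 = 0 := by linarith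
      have h2 : (a - a₀) ^ 2 = 0 := (mul_eq_zero.mp h1).resolve_left (ne_of_gt hc)
      have h3 : a - a₀ = 0 := by
        exact (pow_eq_zero_iff two_ne_zero).mp h2
      linarith
    have hFae : F =ᵐ[volume.restrict X] 0 :=
      (integral_eq_zero_iff_of_nonneg_ae hFnn hFint).mp hF0
    filter_upwards [hFae, ae_restrict_mem hXmeas] with x hF hx
    have hF0x : F x = 0 := by simpa using hF
    have h1 : 0 < lam₀ x := hDpos lam₀ hlam₀D x hx
    have h2 : 0 < q x := hDpos q hq x hx
    have htpos : 0 < t x := by rw [htx]; positivity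
    have ht1 : t x = 1 := by
      by_contra hne
      have hlt := Real.log_lt_sub_one_of_pos htpos hne
      have hFxx : lam₀ x * (t x - 1 - Real.log (t x)) = 0 := by
        rw [← hFx]; exact hF0x
      have h3 : t x - 1 - Real.log (t x) = 0 :=
        (mul_eq_zero.mp hFxx).resolve_left (ne_of_gt h1)
      linarith
    have h4 : a₀ * q x = a * lam₀ x := by
      have hne : a * lam₀ x ≠ 0 := by positivity
      have h5 : (a₀ * q x) / (a * lam₀ x) = 1 := by rw [← htx]; exact ht1
      exact (div_eq_one_iff_eq hne).mp h5
    rw [haa] at h4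
    exact mul_left_cancel₀ (ne_of_gt ha₀pos) h4
  · intro hae
    have haa : a = a₀ := by
      rw [hadef, ha₀def]
      exact integral_congr_ae hae
    have hII : ∫ x in X, lam₀ x * Real.log (q x)
        = ∫ x in X, lam₀ x * Real.log (lam₀ x) :=
      integral_congr_ae (hae.mono fun x h => by
        show lam₀ x * Real.log (q x) = lam₀ x * Real.log (lam₀ x)
        rw [h])
    rw [hE q hq, hE lam₀ hlam₀D, hII, ← ha₀def, ← hadef, haa]
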